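/- Let N ≥ 2 and let α : Fin N → ℂ satisfy Σ_i |α_i|² = 1. Define the N×N complex matrix ρ = (1/N!) · Σ_{σ ∈ S_N} v_σ v_σ*, where for each permutation σ of {0,…,N−1} the column vector v_σ has entries (v_σ)_i = α_{σ⁻¹(i)}, and v_σ* is its conjugate transpose. Then: (i) ρ_{ii} = 1/N for every i; and (ii) for all i ≠ j, ρ_{ij} = (1/(N(N−1))) · Σ_{k ≠ l} α_k · conj(α_l); in particular all off-diagonal entries of ρ are equal to a common real number a. -/

import Mathlib

open Finset

lemma sum_perm_single {N : ℕ} (f : Fin N → ℂ) (i i' : Fin N) :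
    ∑ σ : Equiv.Perm (Fin N), f (σ⁻¹ i) = ∑ σ : Equiv.Perm (Fin N), f (σ⁻¹ i') := by
  refine Fintype.sum_equiv (Equiv.mulLeft (Equiv.swap i i')) _ _ (fun σ => ?_)
  simp [mul_inv_rev, Equiv.Perm.mul_apply, Equiv.swap_inv, Equiv.swap_apply_left]

lemma sum_perm_pair {N : ℕ} (f : Fin N → Fin N → ℂ) {i j i' j' : Fin N}
    (hij : i ≠ j) (hij' : i' ≠ j') :
    ∑ σ : Equiv.Perm (Fin N), f (σ⁻¹ i) (σ⁻¹ j)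
      = ∑ σ : Equiv.Perm (Fin N), f (σ⁻¹ i') (σ⁻¹ j') := by
  set τ := Equiv.swap i i' with hτ
  set j₂ := τ j with hj₂def
  have hj₂i' : j₂ ≠ i' := by
    intro h
    have : j = τ.symm i' := by rw [← h, hj₂def, Equiv.symm_apply_apply]
    rw [hτ, Equiv.symm_swap, Equiv.swap_apply_right] at this
    exact hij this.symm
  set π := (Equiv.swap j₂ j') * τ with hπ
  have hπi : π i = i' := by
    simp [hπ, Equiv.Perm.mul_apply, hτ, Equiv.swap_apply_left,
      Equiv.swap_apply_of_ne_of_ne hj₂i'.symm hij']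
  have hπj : π j = j' := by
    simp [hπ, Equiv.Perm.mul_apply, ← hj₂def, Equiv.swap_apply_left]
  refine Fintype.sum_equiv (Equiv.mulLeft π) _ _ (fun σ => ?_)
  have h1 : π⁻¹ i' = i := by rw [← hπi]; exact Equiv.symm_apply_apply π i
  have h2 : π⁻¹ j' = j := by rw [← hπj]; exact Equiv.symm_apply_apply π j
  simp [mul_inv_rev, Equiv.Perm.mul_apply, h1, h2]


/-- The permutation-averaged matrix ρ = (1/N!)·Σ_σ v_σ v_σ*, with
(v_σ)_i = α_{σ⁻¹(i)} and Σ_i |α_i|² = 1, has all diagonal entries 1/N and all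
off-diagonal entries equal to (1/(N(N−1)))·Σ_{k≠l} α_k·conj(α_l), which is a
common real number a. -/
theorem random_permutation_density_matrix
    {N : ℕ} (hN : 2 ≤ N) (α : Fin N → ℂ)
    (hα : ∑ i : Fin N, ‖α i‖ ^ 2 = 1)
    (ρ : Matrix (Fin N) (Fin N) ℂ)
    (hρ : ρ = ((N.factorial : ℂ))⁻¹ • ∑ σ : Equiv.Perm (Fin N),
      Matrix.of (fun i j : Fin N => α (σ⁻¹ i) * (starRingEnd ℂ) (α (σ⁻¹ j)))) :
    (∀ i : Fin N, ρ i i = (N : ℂ)⁻¹) ∧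
    (∀ i j : Fin N, i ≠ j →
      ρ i j = ((N : ℂ) * ((N : ℂ) - 1))⁻¹ *
        ∑ k : Fin N, ∑ l ∈ Finset.univ.erase k, α k * (starRingEnd ℂ) (α l)) ∧
    (∃ a : ℝ, ∀ i j : Fin N, i ≠ j → ρ i j = (a : ℂ)) := by
  have hNne : N ≠ 0 := by omega
  have hNC : (N : ℂ) ≠ 0 := Nat.cast_ne_zero.mpr hNne
  have hN1C : (N : ℂ) - 1 ≠ 0 := by
    intro h
    have h1 : (N : ℂ) = ((1:ℕ) : ℂ) := by push_cast; linear_combination h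
    have : N = 1 := by exact_mod_cast h1
    omega
  have hfac : (N.factorial : ℂ) ≠ 0 := by
    exact_mod_cast Nat.factorial_ne_zero N
  -- entry formula
  have hentry : ∀ i j : Fin N, ρ i j = (N.factorial : ℂ)⁻¹ *
      ∑ σ : Equiv.Perm (Fin N), α (σ⁻¹ i) * (starRingEnd ℂ) (α (σ⁻¹ j)) := by
    intro i j
    rw [hρ]
    simp [Matrix.sum_apply]
  have hnorm : ∑ k : Fin N, α k * (starRingEnd ℂ) (α k) = 1 := by
    have : ∀ z : ℂ, z * (starRingEnd ℂ) z = ((‖z‖ ^ 2 : ℝ) : ℂ) := by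
      intro z
      rw [Complex.mul_conj, Complex.normSq_eq_norm_sq]
    simp only [this]
    exact_mod_cast hα
  constructor
  · -- diagonal
    intro i
    set D : Fin N → ℂ := fun i => ∑ σ : Equiv.Perm (Fin N),
      α (σ⁻¹ i) * (starRingEnd ℂ) (α (σ⁻¹ i)) with hD
    have hDsum : ∑ i' : Fin N, D i' = (N.factorial : ℂ) := by
      rw [hD]
      rw [Finset.sum_comm]
      have : ∀ σ : Equiv.Perm (Fin N),
          ∑ i' : Fin N, α (σ⁻¹ i') * (starRingEnd ℂ) (α (σ⁻¹ i')) = 1 := by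
        intro σ
        rw [Equiv.sum_comp (σ⁻¹ : Equiv.Perm (Fin N))
          (fun k => α k * (starRingEnd ℂ) (α k))]
        exact hnorm
      simp only [this]
      simp [this, Finset.card_univ, Fintype.card_perm]
    have hDconst : ∀ i' : Fin N, D i' = D i := fun i' =>
      sum_perm_single (fun k => α k * (starRingEnd ℂ) (α k)) i' i
    have hNDi : (N : ℂ) * D i = (N.factorial : ℂ) := by
      rw [← hDsum, Finset.sum_congr rfl (fun i' _ => hDconst i')]
      simp [Finset.card_univ, mul_comm]
    rw [hentry i i]
    show (↑N.factorial)⁻¹ * D i = (↑N)⁻¹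
    field_simp
    linear_combination hNDi
  · -- off-diagonal
    have hoff : ∀ i j : Fin N, i ≠ j →
        ρ i j = ((N : ℂ) * ((N : ℂ) - 1))⁻¹ *
          ∑ k : Fin N, ∑ l ∈ Finset.univ.erase k, α k * (starRingEnd ℂ) (α l) := by
      intro i j hij
      set T : ℂ := ∑ k : Fin N, ∑ l ∈ Finset.univ.erase k,
        α k * (starRingEnd ℂ) (α l) with hT
      set E : Fin N → Fin N → ℂ := fun i j => ∑ σ : Equiv.Perm (Fin N),
        α (σ⁻¹ i) * (starRingEnd ℂ) (α (σ⁻¹ j)) with hE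
      have hper : ∀ σ : Equiv.Perm (Fin N),
          ∑ i' : Fin N, ∑ j' ∈ Finset.univ.erase i',
            α (σ⁻¹ i') * (starRingEnd ℂ) (α (σ⁻¹ j')) = T := by
        intro σ
        rw [← Equiv.sum_comp (σ : Fin N ≃ Fin N)
          (fun i' => ∑ j' ∈ Finset.univ.erase i',
            α (σ⁻¹ i') * (starRingEnd ℂ) (α (σ⁻¹ j')))]
        rw [hT]
        refine Finset.sum_congr rfl (fun k _ => ?_)
        simp only [← Equiv.Perm.mul_apply, inv_mul_cancel, Equiv.Perm.one_apply]
        exact (Finset.sum_equiv (σ : Fin N ≃ Fin N)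
          (fun l => by simp [Finset.mem_erase, σ.injective.ne_iff])
          (fun l _ => by simp)).symm
      have hEsum : ∑ i' : Fin N, ∑ j' ∈ Finset.univ.erase i', E i' j'
          = (N.factorial : ℂ) * T := by
        have swap1 : ∑ i' : Fin N, ∑ j' ∈ Finset.univ.erase i', E i' j'
            = ∑ σ : Equiv.Perm (Fin N), ∑ i' : Fin N, ∑ j' ∈ Finset.univ.erase i',
                α (σ⁻¹ i') * (starRingEnd ℂ) (α (σ⁻¹ j')) := by
          rw [hE]
          rw [Finset.sum_comm]
          refine Finset.sum_congr rfl (fun σ _ => Finset.sum_comm)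
        rw [swap1]
        rw [Finset.sum_congr rfl (fun σ _ => hper σ)]
        simp [Finset.card_univ, Fintype.card_perm, mul_comm]
      have hEconst : ∀ i' j' : Fin N, i' ≠ j' → E i' j' = E i j := by
        intro i' j' h
        exact sum_perm_pair (fun k l => α k * (starRingEnd ℂ) (α l)) h hij
      have hcount : ∑ i' : Fin N, ∑ j' ∈ Finset.univ.erase i', E i' j'
          = (N : ℂ) * ((N : ℂ) - 1) * E i j := by
        have step : ∀ i' : Fin N, ∑ j' ∈ Finset.univ.erase i', E i' j'
            = ((N : ℂ) - 1) * E i j := by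
          intro i'
          rw [Finset.sum_congr rfl (fun j' hj' =>
            hEconst i' j' (Finset.ne_of_mem_erase hj').symm)]
          rw [Finset.sum_const, Finset.card_erase_of_mem (Finset.mem_univ i'),
            Finset.card_univ, Fintype.card_fin, nsmul_eq_mul]
          congr 1
          push_cast [Nat.cast_sub (by omega : 1 ≤ N)]
          ring
        rw [Finset.sum_congr rfl (fun i' _ => step i')]
        rw [Finset.sum_const, Finset.card_univ, Fintype.card_fin, nsmul_eq_mul]
        ring
      have hkey : (N : ℂ) * ((N : ℂ) - 1) * E i j = (N.factorial : ℂ) * T := by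
        rw [← hcount, hEsum]
      rw [hentry i j]
      show (↑N.factorial)⁻¹ * E i j = ((N : ℂ) * ((N : ℂ) - 1))⁻¹ * T
      field_simp
      linear_combination hkey
    refine ⟨hoff, ?_⟩
    -- reality
    set S : ℂ := ∑ k : Fin N, α k with hS
    have hTval : ∑ k : Fin N, ∑ l ∈ Finset.univ.erase k, α k * (starRingEnd ℂ) (α l)
        = ((Complex.normSq S : ℝ) : ℂ) - 1 := by
      have step : ∀ k : Fin N, ∑ l ∈ Finset.univ.erase k, α k * (starRingEnd ℂ) (α l)
          = α k * (starRingEnd ℂ) S - α k * (starRingEnd ℂ) (α k) := by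
        intro k
        rw [← Finset.mul_sum, Finset.sum_erase_eq_sub (Finset.mem_univ k), hS,
          map_sum]
        ring
      rw [Finset.sum_congr rfl (fun k _ => step k), Finset.sum_sub_distrib,
        ← Finset.sum_mul, hnorm, ← hS, Complex.mul_conj]
    refine ⟨((N : ℝ) * ((N : ℝ) - 1))⁻¹ * (Complex.normSq S - 1), fun i j hij => ?_⟩
    rw [hoff i j hij, hTval]
    push_cast
    ring
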